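/- Let T₁ and T₂ be commuting contractions on a complex Hilbert space H and T = T₁T₂. Let F★ := H ⊕ H, let P′ be the orthogonal projection of F★ onto the first summand, and suppose U′ is a unitary on F★ satisfying U′(D_{T₁*}T₂*h, D_{T₂*}h) = (D_{T₁*}h, D_{T₂*}T₁*h) for all h ∈ H. Define γ : H → F★ by γh := (D_{T₁*}T₂*h, D_{T₂*}h), and set H₁ := (I − P′)U′ and H₂ := U′*P′. Then for all h ∈ H: γ(T₁*h) = H₁(γh) + H₂*(γ(T*h)) and γ(T₂*h) = H₂(γh) + H₁*(γ(T*h)). -/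

import Mathlib

set_option maxHeartbeats 1000000


open ContinuousLinearMap

/-- The Hilbert space direct sum `H ⊕ H`, realized as `WithLp 2 (H × H)`. -/
noncomputable abbrev HilbertProd (H : Type*) : Type _ := WithLp 2 (H × H)

/-- The element `(x, y)` of the Hilbert space direct sum `H ⊕ H`. -/
noncomputable abbrev pairL2 {H : Type*} (x y : H) : HilbertProd H :=
  (WithLp.equiv 2 (H × H)).symm (x, y)

/-- Let `T₁, T₂` be commuting contractions, `T = T₁T₂`, with adjoint defect operators
`D₁ = D_{T₁*}`, `D₂ = D_{T₂*}`, `D = D_{T*}`.  On `F★ = H ⊕ H` let `P'` be the projection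
onto the first summand, `U'` a unitary with `U'(D₁T₂*h, D₂h) = (D₁h, D₂T₁*h)`,
`γh = (D₁T₂*h, D₂h)`, `H₁ = (I-P')U'`, `H₂ = U'*P'`.  Then
`γ(T₁*h) = H₁(γh) + H₂*(γ(T*h))` and `γ(T₂*h) = H₂(γh) + H₁*(γ(T*h))`. -/
theorem ando_tuple_relations_adjoint {H : Type*} [NormedAddCommGroup H]
    [InnerProductSpace ℂ H] [CompleteSpace H] (T₁ T₂ D₁ D₂ D : H →L[ℂ] H)
    (hT₁ : ‖T₁‖ ≤ 1) (hT₂ : ‖T₂‖ ≤ 1) (hcomm : T₁ * T₂ = T₂ * T₁)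
    (hD₁pos : D₁.IsPositive) (hD₁sq : D₁ * D₁ = 1 - T₁ * adjoint T₁)
    (hD₂pos : D₂.IsPositive) (hD₂sq : D₂ * D₂ = 1 - T₂ * adjoint T₂)
    (hDpos : D.IsPositive) (hDsq : D * D = 1 - (T₁ * T₂) * adjoint (T₁ * T₂))
    (P' U' : HilbertProd H →L[ℂ] HilbertProd H)
    (hP' : ∀ x y : H, P' (pairL2 x y) = pairL2 x 0)
    (hU'iso : adjoint U' * U' = 1) (hU'co : U' * adjoint U' = 1)
    (hU' : ∀ h : H, U' (pairL2 (D₁ (adjoint T₂ h)) (D₂ h))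
      = pairL2 (D₁ h) (D₂ (adjoint T₁ h)))
    (gam : H → HilbertProd H)
    (hgam : ∀ h : H, gam h = pairL2 (D₁ (adjoint T₂ h)) (D₂ h))
    (H₁ H₂ : HilbertProd H →L[ℂ] HilbertProd H)
    (hH₁ : H₁ = (1 - P') * U') (hH₂ : H₂ = adjoint U' * P') :
    ∀ h : H,
      gam (adjoint T₁ h) = H₁ (gam h) + adjoint H₂ (gam (adjoint (T₁ * T₂) h)) ∧
      gam (adjoint T₂ h) = H₂ (gam h) + adjoint H₁ (gam (adjoint (T₁ * T₂) h)) := by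
  have hall : ∀ v : HilbertProd H, v = pairL2 v.fst v.snd := fun v => rfl
  have hpair_eq : ∀ {a b c d : H}, a = c → b = d → pairL2 a b = pairL2 c d := by
    intro a b c d h1 h2; rw [h1, h2]
  -- `P'` acts as projection onto the first coordinate on every element
  have hP'' : ∀ v : HilbertProd H, P' v = pairL2 v.fst 0 := by
    intro v; rw [hall v, hP']; rfl
  -- `1 - P'` projects onto the second coordinate
  have hQ : ∀ a b : H, (1 - P') (pairL2 a b) = pairL2 0 b := by
    intro a b
    have h1 : (1 - P') (pairL2 a b) = pairL2 a b - P' (pairL2 a b) := rfl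
    rw [h1, hP']
    rw [hall (pairL2 a b - pairL2 a 0)]
    exact hpair_eq (sub_self a) (sub_zero b)
  have hadd : ∀ a b : H, pairL2 a 0 + pairL2 0 b = pairL2 a b := by
    intro a b
    rw [hall (pairL2 a 0 + pairL2 0 b)]
    exact hpair_eq (add_zero a) (zero_add b)
  -- `P'` is self-adjoint
  have hP'sa : adjoint P' = P' := by
    symm
    rw [ContinuousLinearMap.eq_adjoint_iff]
    intro x y
    simp [hP'' x, hP'' y, WithLp.prod_inner_apply]
  -- adjoint of `U'` inverts `U'`
  have hinv : ∀ v : HilbertProd H, adjoint U' (U' v) = v := by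
    intro v
    have := congrArg (fun A : HilbertProd H →L[ℂ] HilbertProd H => A v) hU'iso
    simpa using this
  have hUsa : adjoint (adjoint U') = U' := ContinuousLinearMap.adjoint_adjoint U'
  have hTadj : adjoint (T₁ * T₂) = adjoint T₂ * adjoint T₁ :=
    ContinuousLinearMap.adjoint_comp T₁ T₂
  have hcomm' : adjoint T₁ * adjoint T₂ = adjoint T₂ * adjoint T₁ := by
    calc adjoint T₁ * adjoint T₂ = adjoint (T₂ * T₁) :=
          (ContinuousLinearMap.adjoint_comp T₂ T₁).symm
    _ = adjoint (T₁ * T₂) := by rw [hcomm]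
    _ = adjoint T₂ * adjoint T₁ := hTadj
  have hTadj' : ∀ h : H, adjoint (T₁ * T₂) h = adjoint T₂ (adjoint T₁ h) := by
    intro h; rw [hTadj]; rfl
  have hcomm'' : ∀ h : H, adjoint T₁ (adjoint T₂ h) = adjoint T₂ (adjoint T₁ h) := by
    intro h
    have := congrArg (fun A : H →L[ℂ] H => A h) hcomm'
    simpa using this
  -- adjoints of `H₁` and `H₂`
  have hH₁adj : adjoint H₁ = adjoint U' * (1 - P') := by
    rw [hH₁, show ((1 - P') * U' : HilbertProd H →L[ℂ] HilbertProd H) = (1 - P') ∘L U' from rfl,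
      ContinuousLinearMap.adjoint_comp]
    congr 1
    rw [map_sub, hP'sa]
    congr 1
    exact ContinuousLinearMap.adjoint_id
  have hH₂adj : adjoint H₂ = P' * U' := by
    rw [hH₂, show (adjoint U' * P' : HilbertProd H →L[ℂ] HilbertProd H)
        = adjoint U' ∘L P' from rfl,
      ContinuousLinearMap.adjoint_comp, hP'sa, hUsa]
    rfl
  intro h
  constructor
  · -- first identity
    have e1 : H₁ (gam h) = pairL2 0 (D₂ (adjoint T₁ h)) := by
      rw [hH₁, hgam]
      show (1 - P') (U' _) = _
      rw [hU' h, hQ]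
    have e2 : adjoint H₂ (gam (adjoint (T₁ * T₂) h)) =
        pairL2 (D₁ (adjoint T₂ (adjoint T₁ h))) 0 := by
      rw [hH₂adj, hgam]
      show P' (U' _) = _
      rw [hU' (adjoint (T₁ * T₂) h), hP'', hTadj' h]
      rfl
    rw [e1, e2, hgam]
    rw [add_comm, hadd]
  · -- second identity
    have e1 : H₂ (gam h) = adjoint U' (pairL2 (D₁ (adjoint T₂ h)) 0) := by
      rw [hH₂, hgam]
      show adjoint U' (P' _) = _
      rw [hP'']
      rfl
    have e2 : adjoint H₁ (gam (adjoint (T₁ * T₂) h)) =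
        adjoint U' (pairL2 0 (D₂ (adjoint (T₁ * T₂) h))) := by
      rw [hH₁adj, hgam]
      show adjoint U' ((1 - P') _) = _
      rw [hQ]
    rw [e1, e2, ← map_add, hadd]
    have key : U' (gam (adjoint T₂ h)) =
        pairL2 (D₁ (adjoint T₂ h)) (D₂ (adjoint (T₁ * T₂) h)) := by
      rw [hgam, hU' (adjoint T₂ h), hTadj' h, hcomm'' h]
    rw [← key, hinv]
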